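/- Let Γ(N, L^M) be a simple game with maximal losing coalitions L^M, and let C ⊆ 2^N be a collection of coalitions such that every x ∈ L^M has Hamming distance at most 1 from some c ∈ C. Then the dimension of Γ(N, L^M) is at most |C|. -/

import Mathlib

open Finset

/-- Winning predicate of the simple game determined by a collection `L` of
(maximal) losing coalitions: `S` loses iff `S ⊆ y` for some `y ∈ L`. -/
def wins {n : ℕ} (L : Finset (Finset (Fin n))) (S : Finset (Fin n)) : Prop :=
  ∀ y ∈ L, ¬ S ⊆ y

/-- A winning predicate is weighted with quota `q` and nonnegative weights `w`. -/
def IsWeightedRepr {n : ℕ} (win : Finset (Fin n) → Prop) (q : ℝ) (w : Fin n → ℝ) : Prop :=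
  0 ≤ q ∧ (∀ i, 0 ≤ w i) ∧ ∀ S : Finset (Fin n), win S ↔ q ≤ ∑ i ∈ S, w i

/-- A winning predicate is weighted. -/
def IsWeighted {n : ℕ} (win : Finset (Fin n) → Prop) : Prop :=
  ∃ q w, IsWeightedRepr win q w

/-- Hamming distance between coalitions. -/
def hdist {n : ℕ} (x y : Finset (Fin n)) : ℕ := (x \ y).card + (y \ x).card

/-- The dimension of a game given by its winning predicate: the least `d` such that
the game is the intersection of `d` weighted games. -/
noncomputable def gameDim {n : ℕ} (win : Finset (Fin n) → Prop) : ℕ :=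
  sInf {d | ∃ W : Fin d → (Finset (Fin n) → Prop),
    (∀ i, IsWeighted (W i)) ∧ ∀ S, win S ↔ ∀ i, W i S}

/-- A simple game on `n` players. -/
structure SimpleGame (n : ℕ) where
  win : Finset (Fin n) → Prop
  mono : ∀ S T : Finset (Fin n), S ⊆ T → win S → win T
  empty_not_win : ¬ win ∅
  univ_win : win Finset.univ

/-- The maximal losing coalitions of a simple game. -/
def maxLosing {n : ℕ} (G : SimpleGame n) : Set (Finset (Fin n)) :=
  {T | ¬ G.win T ∧ ∀ T' : Finset (Fin n), T ⊂ T' → G.win T'}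

/-- `C` is a binary covering code of length `n` with covering radius `1`. -/
def IsCoveringCode {n : ℕ} (C : Finset (Finset (Fin n))) : Prop :=
  ∀ x : Finset (Fin n), ∃ c ∈ C, hdist x c ≤ 1

/-- `K n`: the minimum size of a binary covering code of length `n`, radius `1`. -/
noncomputable def K (n : ℕ) : ℕ :=
  sInf {k | ∃ C : Finset (Finset (Fin n)), IsCoveringCode C ∧ C.card = k}

lemma hdist_le_one_cases {n : ℕ} {y c : Finset (Fin n)} (h : hdist y c ≤ 1) :
    y = c ∨ (∃ i, i ∉ c ∧ y = insert i c) ∨ (∃ j, j ∈ c ∧ y = c.erase j) := by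
  unfold hdist at h
  rcases Nat.eq_zero_or_pos (y \ c).card with h1 | h1
  · have hyc : y ⊆ c := Finset.sdiff_eq_empty_iff_subset.mp (Finset.card_eq_zero.mp h1)
    rcases Nat.eq_zero_or_pos (c \ y).card with h2 | h2
    · left
      exact Finset.Subset.antisymm hyc
        (Finset.sdiff_eq_empty_iff_subset.mp (Finset.card_eq_zero.mp h2))
    · have h2' : (c \ y).card = 1 := by omega
      obtain ⟨j, hj⟩ := Finset.card_eq_one.mp h2'
      have hjc : j ∈ c \ y := by rw [hj]; exact mem_singleton_self j
      refine Or.inr (Or.inr ⟨j, (mem_sdiff.mp hjc).1, ?_⟩)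
      ext x; simp only [Finset.mem_erase]
      constructor
      · intro hx
        exact ⟨fun hxj => (mem_sdiff.mp hjc).2 (hxj ▸ hx), hyc hx⟩
      · rintro ⟨hxj, hxc⟩
        by_contra hxy
        have hx : x ∈ c \ y := mem_sdiff.mpr ⟨hxc, hxy⟩
        rw [hj] at hx
        exact hxj (mem_singleton.mp hx)
  · have h1' : (y \ c).card = 1 := by omega
    have h2 : (c \ y).card = 0 := by omega
    have hcy : c ⊆ y := Finset.sdiff_eq_empty_iff_subset.mp (Finset.card_eq_zero.mp h2)
    obtain ⟨i, hi⟩ := Finset.card_eq_one.mp h1'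
    have hiy : i ∈ y \ c := by rw [hi]; exact mem_singleton_self i
    refine Or.inr (Or.inl ⟨i, (mem_sdiff.mp hiy).2, ?_⟩)
    ext x; simp only [Finset.mem_insert]
    constructor
    · intro hx
      by_cases hxc : x ∈ c
      · exact Or.inr hxc
      · have hx' : x ∈ y \ c := mem_sdiff.mpr ⟨hx, hxc⟩
        rw [hi] at hx'
        exact Or.inl (mem_singleton.mp hx')
    · rintro (rfl | hx)
      · exact (mem_sdiff.mp hiy).1
      · exact hcy hx

lemma isWeighted_of_nat {n : ℕ} (win : Finset (Fin n) → Prop) (q : ℕ) (w : Fin n → ℕ)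
    (h : ∀ S, win S ↔ q ≤ ∑ i ∈ S, w i) : IsWeighted win := by
  refine ⟨q, fun i => (w i : ℝ), Nat.cast_nonneg q, fun i => Nat.cast_nonneg _, fun S => ?_⟩
  rw [h S, show ∑ i ∈ S, ((w i : ℕ) : ℝ) = ((∑ i ∈ S, w i : ℕ) : ℝ) by push_cast; ring]
  exact (Nat.cast_le).symm

lemma weighted_ball {n : ℕ} (L' : Finset (Finset (Fin n))) (c : Finset (Fin n))
    (hanti : IsAntichain (· ⊆ ·) (L' : Set (Finset (Fin n))))
    (hball : ∀ y ∈ L', hdist y c ≤ 1) : IsWeighted (wins L') := by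
  classical
  rcases L'.eq_empty_or_nonempty with rfl | ⟨y₀, hy₀⟩
  · exact isWeighted_of_nat _ 0 (fun _ => 0) (fun S => by simp [wins])
  by_cases hsub : ∃ y ∈ L', y ⊂ c
  · -- all maximal losing sets are of the form c.erase j
    obtain ⟨y₁, hy₁, hy₁c⟩ := hsub
    set B : Finset (Fin n) := c.filter (fun j => c.erase j ∈ L') with hB
    have hBc : B ⊆ c := filter_subset _ _
    have hBL : ∀ j ∈ B, c.erase j ∈ L' := fun j hj => (mem_filter.mp hj).2
    have hform : ∀ y ∈ L', ∃ j ∈ B, y = c.erase j := by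
      intro y hy
      rcases hdist_le_one_cases (hball y hy) with rfl | ⟨i, hic, rfl⟩ | ⟨j, hjc, rfl⟩
      · exact absurd hy₁c.subset (hanti hy₁ hy (ne_of_ssubset hy₁c))
      · have hne : y₁ ≠ insert i c := by
          intro h; rw [h] at hy₁c
          exact (not_subset_of_ssubset hy₁c) (subset_insert i c)
        exact absurd (hy₁c.subset.trans (subset_insert i c)) (hanti hy₁ hy hne)
      · exact ⟨j, mem_filter.mpr ⟨hjc, hy⟩, rfl⟩
    obtain ⟨j₁, hj₁, _⟩ := hform y₁ hy₁
    have hb : 1 ≤ B.card := card_pos.mpr ⟨j₁, hj₁⟩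
    refine isWeighted_of_nat _ B.card
      (fun i => if i ∈ B then 1 else if i ∈ c then 0 else B.card) (fun S => ?_)
    show wins L' S ↔ B.card ≤ ∑ i ∈ S, (if i ∈ B then 1 else if i ∈ c then 0 else B.card)
    constructor
    · intro hw
      by_cases hSc : S ⊆ c
      · have hBS : B ⊆ S := by
          intro j hj
          by_contra hjS
          exact hw (c.erase j) (hBL j hj)
            (fun x hx => mem_erase.mpr ⟨fun h => hjS (h ▸ hx), hSc hx⟩)
        calc B.card = ∑ i ∈ B, 1 := by simp
          _ = ∑ i ∈ B, (if i ∈ B then 1 else if i ∈ c then 0 else B.card) :=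
              Finset.sum_congr rfl (fun i hi => by simp [hi])
          _ ≤ _ := Finset.sum_le_sum_of_subset hBS
      · obtain ⟨i, hiS, hic⟩ := not_subset.mp hSc
        have hiB : i ∉ B := fun h => hic (hBc h)
        have := Finset.single_le_sum (f := fun i => if i ∈ B then 1 else if i ∈ c then 0 else B.card)
          (fun i _ => Nat.zero_le _) hiS
        simpa [hiB, hic] using this
    · intro hq y hy hSy
      obtain ⟨j, hjB, rfl⟩ := hform y hy
      have hSc : S ⊆ c := hSy.trans (erase_subset _ _)
      have hjS : j ∉ S := fun h => (mem_erase.mp (hSy h)).1 rfl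
      have hle : ∑ i ∈ S, (if i ∈ B then 1 else if i ∈ c then 0 else B.card)
          ≤ ∑ i ∈ S, (if i ∈ B.erase j then 1 else 0) := by
        refine Finset.sum_le_sum (fun i hi => ?_)
        have hic : i ∈ c := hSc hi
        have hij : i ≠ j := fun h => hjS (h ▸ hi)
        by_cases hiB : i ∈ B
        · simp [hiB, mem_erase, hij]
        · simp [hiB, hic]
      have heq : ∑ i ∈ S, (if i ∈ B.erase j then 1 else 0)
          = (S.filter (fun i => i ∈ B.erase j)).card := by
        rw [Finset.card_filter]
      have hcard : (S.filter (fun i => i ∈ B.erase j)).card ≤ (B.erase j).card := by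
        refine Finset.card_le_card (fun x hx => (mem_filter.mp hx).2)
      have hej : (B.erase j).card = B.card - 1 := card_erase_of_mem hjB
      omega
  · -- all maximal losing sets contain c
    push_neg at hsub
    have hcy : ∀ y ∈ L', c ⊆ y := by
      intro y hy
      rcases hdist_le_one_cases (hball y hy) with rfl | ⟨i, _, rfl⟩ | ⟨j, hjc, rfl⟩
      · exact Subset.rfl
      · exact subset_insert i c
      · exact absurd (erase_ssubset hjc) (hsub _ hy)
    refine isWeighted_of_nat _ 2
      (fun i => if i ∈ c then 0 else if insert i c ∈ L' then 1 else 2) (fun S => ?_)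
    show wins L' S ↔ 2 ≤ ∑ i ∈ S, (if i ∈ c then 0 else if insert i c ∈ L' then 1 else 2)
    constructor
    · intro hw
      by_contra hlt
      push_neg at hlt
      have key : (S \ c).card ≤ ∑ i ∈ S, (if i ∈ c then 0 else if insert i c ∈ L' then 1 else 2) := by
        calc (S \ c).card = ∑ i ∈ S \ c, 1 := by simp
          _ ≤ ∑ i ∈ S \ c, (if i ∈ c then 0 else if insert i c ∈ L' then 1 else 2) := by
              refine Finset.sum_le_sum (fun i hi => ?_)
              have : i ∉ c := (mem_sdiff.mp hi).2
              by_cases h' : insert i c ∈ L' <;> simp [this, h']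
          _ ≤ _ := Finset.sum_le_sum_of_subset (sdiff_subset)
      have hc1 : (S \ c).card ≤ 1 := by omega
      rcases Nat.eq_zero_or_pos (S \ c).card with h0 | hpos
      · have hSc : S ⊆ c := Finset.sdiff_eq_empty_iff_subset.mp (Finset.card_eq_zero.mp h0)
        exact hw y₀ hy₀ (hSc.trans (hcy y₀ hy₀))
      · have h1 : (S \ c).card = 1 := by omega
        obtain ⟨i, hi⟩ := Finset.card_eq_one.mp h1
        have hiS : i ∈ S \ c := by rw [hi]; exact mem_singleton_self i
        have hSi : S ⊆ insert i c := by
          intro x hx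
          by_cases hxc : x ∈ c
          · exact mem_insert_of_mem hxc
          · have : x ∈ S \ c := mem_sdiff.mpr ⟨hx, hxc⟩
            rw [hi] at this
            exact mem_insert.mpr (Or.inl (mem_singleton.mp this))
        by_cases hins : insert i c ∈ L'
        · exact hw _ hins hSi
        · have hic : i ∉ c := (mem_sdiff.mp hiS).2
          have := Finset.single_le_sum
            (f := fun i => if i ∈ c then 0 else if insert i c ∈ L' then 1 else 2)
            (fun i _ => Nat.zero_le _) (mem_sdiff.mp hiS).1
          simp only [hic, hins, if_false] at this
          omega
    · intro hq y hy hSy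
      rcases hdist_le_one_cases (hball y hy) with heq | ⟨i, hic, rfl⟩ | ⟨j, hjc, rfl⟩
      · rw [heq] at hSy
        have : ∑ i ∈ S, (if i ∈ c then 0 else if insert i c ∈ L' then 1 else 2) = 0 :=
          Finset.sum_eq_zero (fun i hi => by simp [hSy hi])
        omega
      · have hle : ∑ x ∈ S, (if x ∈ c then 0 else if insert x c ∈ L' then 1 else 2)
            ≤ ∑ x ∈ S, (if x = i then 1 else 0) := by
          refine Finset.sum_le_sum (fun x hx => ?_)
          rcases mem_insert.mp (hSy hx) with rfl | hxc
          · simp [hic, hy]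
          · simp [hxc]
        have : ∑ x ∈ S, (if x = i then 1 else 0) ≤ 1 := by
          rw [Finset.sum_ite_eq' S i (fun _ => 1)]
          split <;> omega
        omega
      · exact absurd (erase_ssubset hjc) (hsub _ hy)

theorem stmt5 {n : ℕ} (L : Finset (Finset (Fin n)))
    (hanti : IsAntichain (· ⊆ ·) (L : Set (Finset (Fin n))))
    (C : Finset (Finset (Fin n)))
    (hC : ∀ x ∈ L, ∃ c ∈ C, hdist x c ≤ 1) :
    gameDim (wins L) ≤ C.card := by
  classical
  have hWw : ∀ c : Finset (Fin n), IsWeighted (wins (L.filter (fun y => hdist y c ≤ 1))) := by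
    intro c
    refine weighted_ball _ c (hanti.subset ?_) (fun y hy => (mem_filter.mp hy).2)
    exact Finset.coe_subset.mpr (filter_subset _ _)
  apply Nat.sInf_le
  refine ⟨fun i => wins (L.filter (fun y => hdist y ((C.equivFin.symm i) : Finset (Fin n)) ≤ 1)),
    fun i => hWw _, fun S => ?_⟩
  constructor
  · intro hS i y hy
    exact hS y (mem_filter.mp hy).1
  · intro hAll y hyL hSy
    obtain ⟨c, hcC, hdc⟩ := hC y hyL
    have h := hAll (C.equivFin ⟨c, hcC⟩)
    simp only [Equiv.symm_apply_apply] at h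
    exact h y (mem_filter.mpr ⟨hyL, hdc⟩) hSy
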